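/- Let A be an algebra with congruences γ ≤ β, and let U ⊆ A be a subset such that every finitary operation on U is the restriction of a polynomial operation of A. If the term condition TC(α, β; γ) fails, witnessed by a term t and tuples a₁ ≡_α a₂, b̄₁ ≡_β b̄₂ with all entries of b̄₁, b̄₂ in U, then there is a witnessing failure in which the β-shifted tuples differ in only one coordinate; that is, there exist a polynomial s(x, y) and elements b, b' ∈ U with b ≡_β b' such that s(a₁, b) = s(a₁, b') but s(a₂, b) ≠ s(a₂, b'). -/

import Mathlib

/-- A purely functional first-order signature. -/
structure Signature where
  ops : Type
  arity : ops → ℕ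

/-- An algebra for a signature: an interpretation of each operation symbol. -/
structure UAlg (σ : Signature) (A : Type) where
  interp : ∀ o : σ.ops, (Fin (σ.arity o) → A) → A

/-- Terms in `n` variables over a signature. -/
inductive Term (σ : Signature) (n : ℕ) : Type
  | var : Fin n → Term σ n
  | op : (o : σ.ops) → (Fin (σ.arity o) → Term σ n) → Term σ n

/-- Evaluation of a term at a tuple. -/
def Term.eval {σ : Signature} {A : Type} (Alg : UAlg σ A) {n : ℕ} :
    Term σ n → (Fin n → A) → A
  | .var i, v => v i
  | .op o ts, v => Alg.interp o fun j => (ts j).eval Alg v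

/-- A congruence: an equivalence relation compatible with all operations. -/
def IsCongruence {σ : Signature} {A : Type} (Alg : UAlg σ A) (r : A → A → Prop) : Prop :=
  Equivalence r ∧ ∀ (o : σ.ops) (x y : Fin (σ.arity o) → A),
    (∀ i, r (x i) (y i)) → r (Alg.interp o x) (Alg.interp o y)

/-- A `k`-ary polynomial operation: a term operation with parameters. -/
def IsPolynomial {σ : Signature} {A : Type} (Alg : UAlg σ A) {k : ℕ}
    (f : (Fin k → A) → A) : Prop :=
  ∃ (n : ℕ) (t : Term σ (k + n)) (params : Fin n → A),
    ∀ x : Fin k → A, f x = t.eval Alg (Fin.append x params)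

/-- A unary polynomial operation. -/
def IsUnaryPolynomial {σ : Signature} {A : Type} (Alg : UAlg σ A) (f : A → A) : Prop :=
  IsPolynomial Alg (k := 1) fun x => f (x 0)

/-- The term condition TermCond(α, β; γ). -/
def TermCond {σ : Signature} {A : Type} (Alg : UAlg σ A) (α β γ : A → A → Prop) : Prop :=
  ∀ (n m : ℕ) (t : Term σ (n + m)) (a₁ a₂ : Fin n → A) (b₁ b₂ : Fin m → A),
    (∀ i, α (a₁ i) (a₂ i)) → (∀ i, β (b₁ i) (b₂ i)) →
    γ (t.eval Alg (Fin.append a₁ b₁)) (t.eval Alg (Fin.append a₁ b₂)) →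
    γ (t.eval Alg (Fin.append a₂ b₁)) (t.eval Alg (Fin.append a₂ b₂))

/-- β is strongly abelian over γ. -/
def StronglyAbelianOver {σ : Signature} {A : Type} (Alg : UAlg σ A)
    (β γ : A → A → Prop) : Prop :=
  ∀ (n m : ℕ) (t : Term σ (n + m)) (a₁ a₂ : Fin n → A) (b₁ b₂ b₃ : Fin m → A),
    (∀ i, β (a₁ i) (a₂ i)) → (∀ i, β (b₁ i) (b₂ i)) → (∀ i, β (b₂ i) (b₃ i)) →
    γ (t.eval Alg (Fin.append a₁ b₁)) (t.eval Alg (Fin.append a₂ b₂)) →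
    γ (t.eval Alg (Fin.append a₁ b₃)) (t.eval Alg (Fin.append a₂ b₃))

/-- The least congruence containing a binary relation. -/
def congClosure {σ : Signature} {A : Type} (Alg : UAlg σ A) (R : A → A → Prop) :
    A → A → Prop :=
  fun a b => ∀ r, IsCongruence Alg r → (∀ x y, R x y → r x y) → r a b

/-- A subset closed under the operations. -/
def IsSubalgebra {σ : Signature} {A : Type} (Alg : UAlg σ A) (s : Set A) : Prop :=
  ∀ (o : σ.ops) (x : Fin (σ.arity o) → A), (∀ j, x j ∈ s) → Alg.interp o x ∈ s

/-- The power algebra `A^I`. -/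
def UAlg.pow {σ : Signature} {A : Type} (Alg : UAlg σ A) (I : Type) :
    UAlg σ (I → A) :=
  ⟨fun o x i => Alg.interp o fun j => x j i⟩

/-- The product of a family of algebras. -/
def UAlg.pi {σ : Signature} {ι : Type} {A : ι → Type} (Alg : ∀ i, UAlg σ (A i)) :
    UAlg σ (∀ i, A i) :=
  ⟨fun o x i => (Alg i).interp o fun j => x j i⟩

/-- The binary product of two algebras. -/
def UAlg.prod2 {σ : Signature} {A B : Type} (AlgA : UAlg σ A) (AlgB : UAlg σ B) :
    UAlg σ (A × B) :=
  ⟨fun o x => (AlgA.interp o fun j => (x j).1, AlgB.interp o fun j => (x j).2)⟩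

/-- The algebra structure on a subalgebra. -/
def UAlg.sub {σ : Signature} {A : Type} (Alg : UAlg σ A) (s : Set A)
    (hs : IsSubalgebra Alg s) : UAlg σ s :=
  ⟨fun o x => ⟨Alg.interp o fun j => (x j : A), hs o _ fun j => (x j).2⟩⟩

/-- Homomorphisms of algebras. -/
def IsHom {σ : Signature} {A B : Type} (AlgA : UAlg σ A) (AlgB : UAlg σ B)
    (f : A → B) : Prop :=
  ∀ (o : σ.ops) (x : Fin (σ.arity o) → A), f (AlgA.interp o x) = AlgB.interp o (f ∘ x)

/-- An idempotent unary polynomial. -/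
def IsIdempotentPoly {σ : Signature} {A : Type} (Alg : UAlg σ A) (e : A → A) : Prop :=
  IsUnaryPolynomial Alg e ∧ ∀ x, e (e x) = e x

/-- A (⊥, δ)-minimal set. -/
def IsMinimalSet {σ : Signature} {A : Type} (Alg : UAlg σ A) (δ : A → A → Prop)
    (U : Set A) : Prop :=
  (∃ e, IsIdempotentPoly Alg e ∧ U = Set.range e ∧ ∃ a b, δ a b ∧ e a ≠ e b) ∧
  ∀ e', IsIdempotentPoly Alg e' → Set.range e' ⊆ U → (∃ a b, δ a b ∧ e' a ≠ e' b) →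
    Set.range e' = U

/-- μ is an atom of the congruence lattice. -/
def IsAtomCong {σ : Signature} {A : Type} (Alg : UAlg σ A) (μ : A → A → Prop) : Prop :=
  IsCongruence Alg μ ∧ μ ≠ (fun a b => a = b) ∧
  ∀ θ, IsCongruence Alg θ → (∀ a b, θ a b → μ a b) → θ = (fun a b => a = b) ∨ θ = μ

/-- A (⊥, μ)-trace in a minimal set U. -/
def IsTrace {A : Type} (μ : A → A → Prop) (U N : Set A) : Prop :=
  (∃ a ∈ U, N = {x ∈ U | μ x a}) ∧ ∃ x ∈ N, ∃ y ∈ N, x ≠ y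

/-- The body of a minimal set: the union of its traces. -/
def Body {A : Type} (μ : A → A → Prop) (U : Set A) : Set A :=
  {x | ∃ N, IsTrace μ U N ∧ x ∈ N}

/-- Polynomial permutations of U (as functions A → A which are bijective on U). -/
def PolPermFun {σ : Signature} {A : Type} (Alg : UAlg σ A) (U : Set A) : Set (A → A) :=
  { p | IsUnaryPolynomial Alg p ∧ Set.BijOn p U U }

/-- Subdirect irreducibility: there is a pair contained in every nontrivial congruence. -/
def IsSI {σ : Signature} {B : Type} (Alg : UAlg σ B) : Prop :=
  ∃ a b : B, a ≠ b ∧ ∀ θ, IsCongruence Alg θ → θ ≠ (fun x y => x = y) → θ a b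

/-- The subalgebra generated by a set. -/
def genSub {σ : Signature} {B : Type} (Alg : UAlg σ B) (s : Set B) : Set B :=
  ⋂₀ {t | IsSubalgebra Alg t ∧ s ⊆ t}

/-- A strongly solvable congruence: connected to ⊥ by strongly abelian covers. -/
def IsStronglySolvable {σ : Signature} {A : Type} (Alg : UAlg σ A)
    (s : A → A → Prop) : Prop :=
  ∃ (n : ℕ) (c : Fin (n + 1) → (A → A → Prop)),
    c 0 = (fun a b => a = b) ∧ c (Fin.last n) = s ∧
    (∀ i, IsCongruence Alg (c i)) ∧
    ∀ i : Fin n, (∀ a b, c i.castSucc a b → c i.succ a b) ∧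
      StronglyAbelianOver Alg (c i.succ) (c i.castSucc)

/-- The set of n-ary term operations of an algebra. -/
def TermFun {σ : Signature} {A : Type} (Alg : UAlg σ A) (n : ℕ) :
    Set ((Fin n → A) → A) :=
  { g | ∃ t : Term σ n, g = fun v => t.eval Alg v }

/-- Substitution of terms into a term. -/
def Term.subst {σ : Signature} {n k : ℕ} : Term σ n → (Fin n → Term σ k) → Term σ k
  | .var i, f => f i
  | .op o ts, f => .op o (fun j => (ts j).subst f)

theorem Term.eval_subst {σ : Signature} {A : Type} (Alg : UAlg σ A) {n k : ℕ}
    (t : Term σ n) (f : Fin n → Term σ k) (v : Fin k → A) :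
    (t.subst f).eval Alg v = t.eval Alg (fun i => (f i).eval Alg v) := by
  induction t with
  | var i => rfl
  | op o ts ih => simp only [Term.subst, Term.eval]; exact congrArg _ (funext fun j => ih j)

/-- Padding: a polynomial representation with `n` parameters can be re-expressed
with any `N ≥ n` parameters. -/
theorem poly_pad {σ : Signature} {A : Type} (Alg : UAlg σ A) {k n N : ℕ}
    (hn : n ≤ N) (t : Term σ (k + n)) (params : Fin n → A) (d : A) :
    ∃ (t' : Term σ (k + N)) (params' : Fin N → A),
      ∀ x : Fin k → A, t'.eval Alg (Fin.append x params') = t.eval Alg (Fin.append x params) := by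
  refine ⟨t.subst (Fin.addCases (fun i => .var (Fin.castAdd N i))
      (fun j => .var (Fin.natAdd k (Fin.castLE hn j)))),
    fun j => if h : (j : ℕ) < n then params ⟨j, h⟩ else d, fun x => ?_⟩
  rw [Term.eval_subst]
  congr 1
  funext idx
  induction idx using Fin.addCases with
  | left i => simp [Term.eval, Fin.append_left]
  | right j =>
    simp only [Fin.addCases_right, Term.eval, Fin.append_right]
    rw [dif_pos (show ((Fin.castLE hn j : Fin N) : ℕ) < n from j.isLt)]
    congr 1

/-- Composition lemma: substituting unary polynomials in the parameter slots of a
term with one distinguished variable yields a binary polynomial. -/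
theorem comp_poly {σ : Signature} {A : Type} (Alg : UAlg σ A) {m : ℕ}
    (t : Term σ (1 + m)) (p : Fin m → ((Fin 1 → A) → A))
    (hp : ∀ i, IsPolynomial Alg (p i)) (d : A) :
    IsPolynomial Alg (fun v : Fin 2 → A =>
      t.eval Alg (Fin.append (fun _ => v 0) (fun i => p i (fun _ => v 1)))) := by
  choose n tt pr hpr using hp
  set N : ℕ := Finset.univ.sup n with hN
  have hle : ∀ i, n i ≤ N := fun i => Finset.le_sup (Finset.mem_univ i)
  have hpad := fun i => poly_pad Alg (hle i) (tt i) (pr i) d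
  choose tt' pr' hpr' using hpad
  refine ⟨m * N, t.subst (Fin.addCases (fun _ => .var (Fin.castAdd (m * N) 0))
      (fun i => (tt' i).subst (Fin.addCases (fun _ => .var (Fin.castAdd (m * N) 1))
        (fun j => .var (Fin.natAdd 2 (finProdFinEquiv (i, j))))))),
    fun x => pr' (finProdFinEquiv.symm x).1 (finProdFinEquiv.symm x).2, fun v => ?_⟩
  rw [Term.eval_subst]
  dsimp only
  congr 1
  funext idx
  induction idx using Fin.addCases with
  | left i =>
    simp only [Fin.addCases_left, Term.eval, Fin.append_left]
  | right i =>
    simp only [Fin.addCases_right, Fin.append_right]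
    rw [Term.eval_subst]
    have : (fun j => Term.eval Alg
        ((Fin.addCases (fun _ => Term.var (Fin.castAdd (m * N) 1))
          (fun j => Term.var (Fin.natAdd 2 (finProdFinEquiv (i, j)))) : Fin (1 + N) → _) j)
        (Fin.append v (fun x => pr' (finProdFinEquiv.symm x).1 (finProdFinEquiv.symm x).2)))
        = Fin.append (fun _ : Fin 1 => v 1) (pr' i) := by
      funext j
      induction j using Fin.addCases with
      | left j0 => simp [Term.eval, Fin.append_left, Fin.append_right]
      | right j1 =>
        simp only [Fin.addCases_right, Term.eval, Fin.append_right]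
        rw [Equiv.symm_apply_apply]
    rw [this, hpr' i, hpr i]

/-- If TC(α, β; γ) fails with the β-shifted tuples taken from a set U on
which every operation is realized by a polynomial of A, then there is a failure witnessed
by a binary polynomial s(x,y), with the β-shift occurring in a single coordinate. -/
theorem stmt_1 {σ : Signature} {A : Type} (Alg : UAlg σ A)
    (α β γ : A → A → Prop)
    (hβ : IsCongruence Alg β) (hγ : IsCongruence Alg γ)
    (hγβ : ∀ a b, γ a b → β a b)
    (U : Set A)
    (hUpoly : ∀ (k : ℕ) (g : (Fin k → A) → A),
      (∀ x, (∀ i, x i ∈ U) → g x ∈ U) →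
      ∃ p : (Fin k → A) → A, IsPolynomial Alg p ∧ ∀ x, (∀ i, x i ∈ U) → p x = g x)
    {m : ℕ} (t : Term σ (1 + m)) (a₁ a₂ : A) (b₁ b₂ : Fin m → A)
    (ha : α a₁ a₂) (hb : ∀ i, β (b₁ i) (b₂ i))
    (hbU : ∀ i, b₁ i ∈ U) (hbU' : ∀ i, b₂ i ∈ U)
    (heq : γ (t.eval Alg (Fin.append (fun _ : Fin 1 => a₁) b₁))
             (t.eval Alg (Fin.append (fun _ : Fin 1 => a₁) b₂)))
    (hne : ¬ γ (t.eval Alg (Fin.append (fun _ : Fin 1 => a₂) b₁))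
               (t.eval Alg (Fin.append (fun _ : Fin 1 => a₂) b₂))) :
    ∃ (s : (Fin 2 → A) → A) (b b' : A), IsPolynomial Alg s ∧
      b ∈ U ∧ b' ∈ U ∧ β b b' ∧
      γ (s ![a₁, b]) (s ![a₁, b']) ∧ ¬ γ (s ![a₂, b]) (s ![a₂, b']) := by
  classical
  -- find a coordinate where b₁ and b₂ differ
  have hex : ∃ i₀, b₁ i₀ ≠ b₂ i₀ := by
    by_contra h
    push_neg at h
    have : b₁ = b₂ := funext fun i => h i
    subst this
    exact hne (hγ.1.refl _)
  obtain ⟨i₀, hi₀⟩ := hex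
  set b := b₁ i₀ with hbdef
  set b' := b₂ i₀ with hb'def
  -- for each i, a function U → U sending b ↦ b₁ i, b' ↦ b₂ i
  have hg : ∀ i : Fin m, ∃ p : (Fin 1 → A) → A, IsPolynomial Alg p ∧
      p (fun _ => b) = b₁ i ∧ p (fun _ => b') = b₂ i := by
    intro i
    have hmap : ∀ x : Fin 1 → A, (∀ j, x j ∈ U) →
        (if x 0 = b' then b₂ i else b₁ i) ∈ U := by
      intro x _
      split
      · exact hbU' i
      · exact hbU i
    obtain ⟨p, hpoly, hagree⟩ := hUpoly 1 (fun x => if x 0 = b' then b₂ i else b₁ i) hmap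
    refine ⟨p, hpoly, ?_, ?_⟩
    · rw [hagree _ (fun _ => hbU i₀)]; exact if_neg hi₀
    · rw [hagree _ (fun _ => hbU' i₀)]
      show (if b' = b' then _ else _) = _
      rw [if_pos rfl]
  choose p hppoly hpb hpb' using hg
  have e1 : (fun i => p i (fun _ : Fin 1 => b)) = b₁ := funext fun i => hpb i
  have e2 : (fun i => p i (fun _ : Fin 1 => b')) = b₂ := funext fun i => hpb' i
  refine ⟨fun v : Fin 2 → A =>
      t.eval Alg (Fin.append (fun _ => v 0) (fun i => p i (fun _ => v 1))),
    b, b', comp_poly Alg t p hppoly a₁, hbU i₀, hbU' i₀, hb i₀, ?_, ?_⟩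
  · simpa [e1, e2] using heq
  · simpa [e1, e2] using hne
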